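/- Let 𝒫 be a partial clustering with OPT(𝒫) and let (P'_i)_{i∈[k]} be an extension of 𝒫 with associated centers (c'_i) and value at most (1 + t)·OPT(𝒫); set R'_i = P'_i ∩ R. Fix i, j ∈ [k] with |I_i| ≥ Δ + 1 and I_j = ∅ (so that c'_j = c(P'_j)), and let Z_{i,j} ⊆ I_i with Z_{i,j} ≠ I_i be compatible with (P'_i). Let i_{j,min} ∈ I_i − Z_{i,j} minimize d^{e}(u_i, c'_j) over e ∈ I_i − Z_{i,j}, let r_1,…,r_Δ be Δ coordinates of I_i − {i_{j,min}} achieving the Δ largest values of d^{e}(u_i, c'_j) over e ∈ I_i − {i_{j,min}}, set I_{i,j} = I_i − {r_1,…,r_Δ}, and set d^j = d^{I_{i,j}}(u_i, c'_j). For every constant c > 0, let B_j = {x ∈ FD(R, I_i) : d(x, u_i) ≤ d^j/4}. Then either |P'_j − B_j| ≥ c·|FD(R'_i, I_i) − B_j|, or f^{I_{i,j}}_2(P'_j, u_i) − f^{I_{i,j}}_2(P'_j, c'_j) ≤ 16c(1 + t)·OPT(𝒫). -/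
import Mathlib


open Finset

namespace KMD

/-- A point in `ℍ^d`: each coordinate is either a real number or missing (`none`). -/
abbrev HPt (d : ℕ) := Fin d → Option ℝ

variable {d : ℕ}

/-- The domain of a point: the set of coordinates where it is specified. -/
noncomputable def Dom (x : HPt d) : Finset (Fin d) := Finset.univ.filter fun i => x i ≠ none

/-- The number of missing coordinates of a point. -/
noncomputable def numMissing (x : HPt d) : ℕ := (Finset.univ.filter fun i => x i = none).card

/-- A `Δ`-point: at most `Δ` coordinates are missing. -/
def IsDeltaPt (Δ : ℕ) (x : HPt d) : Prop := numMissing x ≤ Δ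

/-- `(a - b)^2`, with the convention that it is `0` when either entry is missing. -/
def coordSq : Option ℝ → Option ℝ → ℝ
  | some a, some b => (a - b) ^ 2
  | _, _ => 0

/-- `d^I(x,y)`. -/
noncomputable def dI (I : Finset (Fin d)) (x y : HPt d) : ℝ :=
  Real.sqrt (∑ i ∈ I, coordSq (x i) (y i))

/-- `d(x,y) = d^{[d]}(x,y)`. -/
noncomputable def dH (x y : HPt d) : ℝ := dI Finset.univ x y

/-- `PD(S, I)`: points of `S` partially defined on `I`. -/
noncomputable def PD (S : Finset (HPt d)) (I : Finset (Fin d)) : Finset (HPt d) :=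
  S.filter fun x => (Dom x ∩ I).Nonempty

/-- `FD(S, I)`: points of `S` fully defined on `I`. -/
noncomputable def FD (S : Finset (HPt d)) (I : Finset (Fin d)) : Finset (HPt d) :=
  S.filter fun x => Dom x ⊆ I

/-- The mean `c^I(P)` of `P` on the coordinates of `I` (unspecified outside `I`). -/
noncomputable def cI (I : Finset (Fin d)) (P : Finset (HPt d)) : HPt d := fun i =>
  if i ∈ I ∧ (PD P {i}).Nonempty then
    some ((∑ x ∈ PD P {i}, (x i).getD 0) / (PD P {i}).card)
  else none

/-- `c(P) = c^{[d]}(P)`. -/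
noncomputable def cP (P : Finset (HPt d)) : HPt d := cI Finset.univ P

/-- `f^I_2(X, y) = Σ_{x ∈ X} d^I(x,y)^2`. -/
noncomputable def f2I (I : Finset (Fin d)) (X : Finset (HPt d)) (y : HPt d) : ℝ :=
  ∑ x ∈ X, dI I x y ^ 2

/-- `f_2 = f^{[d]}_2`. -/
noncomputable def f2 (X : Finset (HPt d)) (y : HPt d) : ℝ := f2I Finset.univ X y

/-- A partial clustering of the instance `P` of `Δ`-points, with `k` clusters. -/
structure PartialClustering (d Δ k : ℕ) (P : Finset (HPt d)) where
  n : Fin k → ℕ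
  H : Fin k → Finset (HPt d)
  I : Fin k → Finset (Fin d)
  u : Fin k → HPt d
  H_sub : ∀ i, H i ⊆ P
  n_le : ∀ i, n i ≤ Δ + 1
  dom_u : ∀ i, Dom (u i) = I i
  I_card : ∀ i, 0 < n i → d - Δ + (n i - 1) ≤ (I i).card
  I_empty : ∀ i, n i = 0 → I i = ∅
  H_empty : ∀ i, n i = 0 → H i = ∅

variable {Δ k : ℕ} {P : Finset (HPt d)}

/-- `R = P − ∪_i H_i`: the points not yet assigned to a cluster. -/
noncomputable def Rset (pc : PartialClustering d Δ k P) : Finset (HPt d) :=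
  P \ Finset.univ.biUnion pc.H

/-- An extension of a partial clustering: a partition `(Q i)` of `P` with `H i ⊆ Q i`. -/
def IsExtension (pc : PartialClustering d Δ k P) (Q : Fin k → Finset (HPt d)) : Prop :=
  (∀ i, pc.H i ⊆ Q i) ∧ (∀ i, Q i ⊆ P) ∧
    (∀ i j, i ≠ j → Disjoint (Q i) (Q j)) ∧ ∀ x ∈ P, ∃ i, x ∈ Q i

/-- The centers associated with an extension: `c'_i` agrees with `u i` on `I i`
and with the mean of `Q i` outside `I i`. -/
noncomputable def centers (pc : PartialClustering d Δ k P)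
    (Q : Fin k → Finset (HPt d)) (i : Fin k) : HPt d :=
  fun r => if r ∈ pc.I i then pc.u i r else cP (Q i) r

/-- The value of an extension. -/
noncomputable def extVal (pc : PartialClustering d Δ k P)
    (Q : Fin k → Finset (HPt d)) : ℝ :=
  ∑ i, f2 (Q i) (centers pc Q i)

/-- `OPT(pc)`: the minimum value over all extensions of `pc`. -/
noncomputable def OPT (pc : PartialClustering d Δ k P) : ℝ :=
  sInf (extVal pc '' {Q | IsExtension pc Q})

/-- An optimal extension. -/
def IsOptimalExtension (pc : PartialClustering d Δ k P)
    (Q : Fin k → Finset (HPt d)) : Prop :=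
  IsExtension pc Q ∧ ∀ Q', IsExtension pc Q' → extVal pc Q ≤ extVal pc Q'

/-- A safe extension. -/
def IsSafe (pc : PartialClustering d Δ k P) (Q : Fin k → Finset (HPt d)) : Prop :=
  ∀ x ∈ Rset pc, ∀ i j : Fin k, Dom x ⊆ pc.I i → Dom x ⊆ pc.I j → x ∈ Q i →
    dH x (centers pc Q i) ≤ dH x (centers pc Q j)

/-- `Z` is a `t`-useless set of coordinates for the pair `(i,j)` and extension `Q`.
For pairs with `I i = ∅` or `I j ≠ ∅` it is by definition the empty set. -/
def IsUseless (pc : PartialClustering d Δ k P) (Q : Fin k → Finset (HPt d))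
    (t : ℝ) (i j : Fin k) (Z : Finset (Fin d)) : Prop :=
  Z ⊆ pc.I i ∧
  (((pc.I i).Nonempty ∧ pc.I j = ∅) →
    (Z = ∅ ∨ d - Δ ≤ Z.card) ∧
    f2I Z (Q j ∩ Rset pc) (pc.u i) - f2I Z (Q j ∩ Rset pc) (centers pc Q j)
      ≤ t * OPT pc) ∧
  (¬ ((pc.I i).Nonempty ∧ pc.I j = ∅) → Z = ∅)

/-- `Z` is compatible with the extension `Q` (for the pair `(i,j)`). -/
def Compatible (pc : PartialClustering d Δ k P) (Q : Fin k → Finset (HPt d))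
    (i j : Fin k) (Z : Finset (Fin d)) : Prop :=
  (∀ x ∈ Q j, ¬ Dom x ⊆ pc.I j → ¬ Dom x ⊆ Z) ∧
  (∀ x ∈ Q j, Dom x ⊆ pc.I i → ¬ dH x (pc.u i) < dH x (centers pc Q j) / 2)

open scoped Classical in
/-- The elements of `FD(S, I)` at distance at most `ρ` from `u`. -/
noncomputable def ballFD (S : Finset (HPt d)) (I : Finset (Fin d))
    (u : HPt d) (ρ : ℝ) : Finset (HPt d) :=
  (FD S I).filter fun x => dH x u ≤ ρ

lemma coordSq_nonneg (a b : Option ℝ) : 0 ≤ coordSq a b := by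
  cases a <;> cases b <;> simp [coordSq] <;> positivity

lemma coordSq_none_left (y : Option ℝ) : coordSq none y = 0 := by cases y <;> rfl

lemma mem_Dom {x : HPt d} {e : Fin d} : e ∈ Dom x ↔ x e ≠ none := by simp [Dom]

lemma dI_sq (I : Finset (Fin d)) (x y : HPt d) :
    dI I x y ^ 2 = ∑ i ∈ I, coordSq (x i) (y i) :=
  Real.sq_sqrt (Finset.sum_nonneg fun i _ => coordSq_nonneg _ _)

lemma dI_nonneg (I : Finset (Fin d)) (x y : HPt d) : 0 ≤ dI I x y := Real.sqrt_nonneg _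

lemma le_of_sqrt_le {a b : ℝ} (ha : 0 ≤ a) (hb : 0 ≤ b)
    (h : Real.sqrt a ≤ Real.sqrt b) : a ≤ b := by
  nlinarith [Real.sq_sqrt ha, Real.sq_sqrt hb, Real.sqrt_nonneg a, Real.sqrt_nonneg b]

lemma sum_le_sum_of_card_le {w : Fin d → ℝ} (hw : ∀ e, 0 ≤ w e) {K J : Finset (Fin d)}
    (hcard : K.card ≤ J.card) (h : ∀ e ∈ K, ∀ r ∈ J, w e ≤ w r) :
    ∑ e ∈ K, w e ≤ ∑ r ∈ J, w r := by
  rcases J.eq_empty_or_nonempty with hJ | hJ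
  · subst hJ
    simp only [Finset.card_empty, Nat.le_zero, Finset.card_eq_zero] at hcard
    simp [hcard]
  · obtain ⟨r₀, hr₀J, hr₀min⟩ := J.exists_min_image w hJ
    calc ∑ e ∈ K, w e ≤ ∑ _e ∈ K, w r₀ := Finset.sum_le_sum fun e he => h e he r₀ hr₀J
      _ = (K.card : ℝ) * w r₀ := by rw [Finset.sum_const, nsmul_eq_mul]
      _ ≤ (J.card : ℝ) * w r₀ :=
          mul_le_mul_of_nonneg_right (Nat.cast_le.2 hcard) (hw r₀)
      _ ≤ ∑ r ∈ J, w r := by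
          have := Finset.card_nsmul_le_sum J w (w r₀) fun r hr => hr₀min r hr
          rwa [nsmul_eq_mul] at this

lemma PD_singleton (S : Finset (HPt d)) (e : Fin d) :
    PD S {e} = S.filter fun x => x e ≠ none := by
  unfold PD
  apply Finset.filter_congr
  intro x _
  simp [Finset.Nonempty, mem_Dom]

lemma centroid_coord (S : Finset (HPt d)) (e : Fin d) (v : ℝ) :
    (∑ x ∈ S, coordSq (x e) (some v)) - (∑ x ∈ S, coordSq (x e) (cP S e))
      = ((PD S {e}).card : ℝ) * coordSq (some v) (cP S e) := by
  classical
  have hPD := PD_singleton S e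
  set T := S.filter (fun x => x e ≠ none) with hT
  have hrestr : ∀ y : Option ℝ, ∑ x ∈ S, coordSq (x e) y = ∑ x ∈ T, coordSq (x e) y := by
    intro y
    refine (Finset.sum_filter_of_ne fun x _ hne hxe => ?_).symm
    rw [hxe, coordSq_none_left] at hne
    exact hne rfl
  rcases T.eq_empty_or_nonempty with hTe | hTne
  · have hc : cP S e = none := by
      unfold cP cI
      rw [if_neg]
      rintro ⟨-, hne⟩
      rw [hPD, hTe] at hne
      exact Finset.not_nonempty_empty hne
    rw [hrestr, hrestr, hTe, hc, hPD, hTe]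
    simp [coordSq]
  · have hn : 0 < (T.card : ℝ) := by exact_mod_cast Finset.card_pos.2 hTne
    set n : ℝ := (T.card : ℝ) with hndef
    set σ : ℝ := ∑ x ∈ T, (x e).getD 0 with hσdef
    have hc : cP S e = some (σ / n) := by
      unfold cP cI
      rw [if_pos ⟨Finset.mem_univ e, by rw [hPD]; exact hTne⟩]
      rw [hPD]
    set m : ℝ := σ / n with hmdef
    have hσ : σ = n * m := by
      rw [hmdef]; field_simp
    have hgetD : ∀ x ∈ T, ∀ u : ℝ, coordSq (x e) (some u) = ((x e).getD 0 - u) ^ 2 := by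
      intro x hx u
      have hne : x e ≠ none := (Finset.mem_filter.1 hx).2
      obtain ⟨a, ha⟩ := Option.ne_none_iff_exists'.1 hne
      rw [ha]; rfl
    rw [hrestr, hrestr, hc, hPD]
    rw [Finset.sum_congr rfl fun x hx => hgetD x hx v,
        Finset.sum_congr rfl fun x hx => hgetD x hx m]
    have expand : ∀ a : ℝ, (a - v) ^ 2 - (a - m) ^ 2 = 2 * a * (m - v) + (v ^ 2 - m ^ 2) := by
      intro a; ring
    have : (∑ x ∈ T, ((x e).getD 0 - v) ^ 2) - ∑ x ∈ T, ((x e).getD 0 - m) ^ 2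
        = 2 * σ * (m - v) + n * (v ^ 2 - m ^ 2) := by
      rw [← Finset.sum_sub_distrib]
      rw [Finset.sum_congr rfl fun x _ => expand ((x e).getD 0)]
      rw [Finset.sum_add_distrib, Finset.sum_const, nsmul_eq_mul, ← hndef]
      rw [← Finset.sum_mul, ← Finset.mul_sum, ← hσdef]
    rw [this, hσ]
    have : coordSq (some v) (some m) = (v - m) ^ 2 := rfl
    rw [this]
    ring


set_option maxHeartbeats 1000000 in
/-- Claim 2 in Lemma 11: either the ball `B_j` leaves many points of
`P'_j`, or the coordinates of `I_{i,j}` are useless. -/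
theorem stmt_13 {d Δ k : ℕ} (hd : 1 ≤ d) (hΔ : Δ < d) (hk : 1 ≤ k)
    {P : Finset (HPt d)} (hP : ∀ y ∈ P, IsDeltaPt Δ y ∧ (Dom y).Nonempty)
    (pc : PartialClustering d Δ k P)
    (t : ℝ) (ht : 0 < t)
    (Q : Fin k → Finset (HPt d)) (hQ : IsExtension pc Q)
    (hval : extVal pc Q ≤ (1 + t) * OPT pc)
    (i j : Fin k) (hIi : Δ + 1 ≤ (pc.I i).card) (hIj : pc.I j = ∅)
    (Z : Finset (Fin d)) (hZsub : Z ⊆ pc.I i) (hZne : Z ≠ pc.I i)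
    (hcompat : Compatible pc Q i j Z)
    (imin : Fin d) (himin : imin ∈ pc.I i \ Z)
    (hminProp : ∀ e ∈ pc.I i \ Z,
      dI {imin} (pc.u i) (centers pc Q j) ≤ dI {e} (pc.u i) (centers pc Q j))
    (Rs : Finset (Fin d)) (hRsub : Rs ⊆ pc.I i \ {imin}) (hRcard : Rs.card = Δ)
    (hRmax : ∀ r ∈ Rs, ∀ s ∈ (pc.I i \ {imin}) \ Rs,
      dI {s} (pc.u i) (centers pc Q j) ≤ dI {r} (pc.u i) (centers pc Q j))
    (dj : ℝ) (hdj : dj = dI (pc.I i \ Rs) (pc.u i) (centers pc Q j))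
    (c : ℝ) (hc : 0 < c)
    (B : Finset (HPt d)) (hB : B = ballFD (Rset pc) (pc.I i) (pc.u i) (dj / 4)) :
    c * ((FD (Q i ∩ Rset pc) (pc.I i) \ B).card : ℝ) ≤ ((Q j \ B).card : ℝ) ∨
      f2I (pc.I i \ Rs) (Q j) (pc.u i) - f2I (pc.I i \ Rs) (Q j) (centers pc Q j)
        ≤ 16 * c * (1 + t) * OPT pc := by
  classical
  by_cases hfirst : c * ((FD (Q i ∩ Rset pc) (pc.I i) \ B).card : ℝ) ≤ ((Q j \ B).card : ℝ)
  · exact Or.inl hfirst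
  right
  push_neg at hfirst
  set u := pc.u i with hu
  set cj := centers pc Q j with hcj
  set Iij := pc.I i \ Rs with hIij
  set w : Fin d → ℝ := fun e => coordSq (u e) (cj e) with hw
  set Sy := FD (Q i ∩ Rset pc) (pc.I i) \ B with hSy
  have hw0 : ∀ e, 0 ≤ w e := fun e => coordSq_nonneg _ _
  have hcjP : ∀ e, cj e = cP (Q j) e := by
    intro e; rw [hcj]; unfold centers; rw [hIj]; simp
  have hdj0 : 0 ≤ dj := hdj ▸ Real.sqrt_nonneg _
  have hdjsq : dj ^ 2 = ∑ e ∈ Iij, w e := by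
    rw [hdj, dI_sq]
  have huI : ∀ e ∈ pc.I i, ∃ v : ℝ, u e = some v := by
    intro e he
    have h1 : e ∈ Dom (pc.u i) := (pc.dom_u i) ▸ he
    rw [mem_Dom] at h1
    exact Option.ne_none_iff_exists'.1 h1
  have hext_nonneg : ∀ Q' : Fin k → Finset (HPt d), 0 ≤ extVal pc Q' := by
    intro Q'
    exact Finset.sum_nonneg fun i' _ => Finset.sum_nonneg fun x _ => sq_nonneg _
  have hOPT0 : 0 ≤ OPT pc :=
    Real.sInf_nonneg fun v hv => by obtain ⟨Q', -, rfl⟩ := hv; exact hext_nonneg Q'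
  have hOPTle : OPT pc ≤ extVal pc Q :=
    csInf_le ⟨0, fun v hv => by obtain ⟨Q', -, rfl⟩ := hv; exact hext_nonneg Q'⟩
      ⟨Q, hQ, rfl⟩
  set E := extVal pc Q with hE
  -- master identity and bound
  have hf2exp : ∀ y : HPt d, f2I Iij (Q j) y = ∑ e ∈ Iij, ∑ x ∈ Q j, coordSq (x e) (y e) := by
    intro y
    unfold f2I
    rw [Finset.sum_congr rfl fun x _ => dI_sq Iij x y]
    exact Finset.sum_comm
  have hdiff : f2I Iij (Q j) u - f2I Iij (Q j) cj
      = ∑ e ∈ Iij, ((PD (Q j) {e}).card : ℝ) * w e := by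
    rw [hf2exp u, hf2exp cj, ← Finset.sum_sub_distrib]
    refine Finset.sum_congr rfl fun e he => ?_
    obtain ⟨v, hv⟩ := huI e (Finset.mem_sdiff.1 (hIij ▸ he)).1
    simp only [hw]
    rw [hcjP e, hv]
    exact centroid_coord (Q j) e v
  have hcard_bound : f2I Iij (Q j) u - f2I Iij (Q j) cj ≤ ((Q j).card : ℝ) * dj ^ 2 := by
    rw [hdiff, hdjsq, Finset.mul_sum]
    refine Finset.sum_le_sum fun e he => ?_
    refine mul_le_mul_of_nonneg_right ?_ (hw0 e)
    have hsub : PD (Q j) {e} ⊆ Q j := by unfold PD; exact Finset.filter_subset _ _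
    exact_mod_cast Finset.card_le_card hsub
  -- points of Sy pay at least (dj/4)^2 each
  have hSyQ : Sy ⊆ Q i := by
    intro y hy
    have h1 := Finset.mem_sdiff.1 hy
    have h2 := Finset.mem_filter.1 h1.1
    exact (Finset.mem_inter.1 h2.1).1
  have hylb : ∀ y ∈ Sy, (dj / 4) ^ 2 ≤ dI Finset.univ y (centers pc Q i) ^ 2 := by
    intro y hy
    obtain ⟨hyF, hyB⟩ := Finset.mem_sdiff.1 hy
    obtain ⟨hyQR, hyDom⟩ := Finset.mem_filter.1 hyF
    have hyR : y ∈ Rset pc := (Finset.mem_inter.1 hyQR).2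
    have hyFD : y ∈ FD (Rset pc) (pc.I i) := Finset.mem_filter.2 ⟨hyR, hyDom⟩
    have hgt : ¬ dH y u ≤ dj / 4 := by
      intro hle
      exact hyB (hB ▸ Finset.mem_filter.2 ⟨hyFD, hle⟩)
    push_neg at hgt
    have heq : dI Finset.univ y (centers pc Q i) = dH y u := by
      unfold dH dI
      congr 1
      refine Finset.sum_congr rfl fun e _ => ?_
      by_cases hye : y e = none
      · rw [hye, coordSq_none_left, coordSq_none_left]
      · have heI : e ∈ pc.I i := hyDom (mem_Dom.2 hye)
        unfold centers
        rw [if_pos heI, hu]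
    rw [heq]
    have h4 : (0:ℝ) ≤ dj / 4 := by positivity
    exact pow_le_pow_left₀ h4 hgt.le 2
  have hf2nonneg : ∀ i' : Fin k, 0 ≤ f2 (Q i') (centers pc Q i') := by
    intro i'
    exact Finset.sum_nonneg fun x _ => sq_nonneg _
  have hcost : ((Sy.card : ℝ)) * (dj / 4) ^ 2 ≤ E := by
    have h1 : ∑ y ∈ Sy, (dj / 4) ^ 2 ≤ ∑ y ∈ Sy, dI Finset.univ y (centers pc Q i) ^ 2 :=
      Finset.sum_le_sum hylb
    have h2 : ∑ y ∈ Sy, dI Finset.univ y (centers pc Q i) ^ 2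
        ≤ ∑ y ∈ Q i, dI Finset.univ y (centers pc Q i) ^ 2 :=
      Finset.sum_le_sum_of_subset_of_nonneg hSyQ fun _ _ _ => sq_nonneg _
    have h3 : ∑ y ∈ Q i, dI Finset.univ y (centers pc Q i) ^ 2 ≤ E := by
      rw [hE]
      unfold extVal
      exact Finset.single_le_sum (fun i' _ => hf2nonneg i') (Finset.mem_univ i)
    have h4 : ∑ y ∈ Sy, (dj / 4) ^ 2 = ((Sy.card : ℝ)) * (dj / 4) ^ 2 := by
      rw [Finset.sum_const, nsmul_eq_mul]
    linarith
  -- no point of Q j lies in the ball when dj ≠ 0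
  have hBQ : ∀ x ∈ Q j, dj ≠ 0 → x ∉ B := by
    intro x hxQ hdjne hxB
    have hdjpos : 0 < dj := lt_of_le_of_ne hdj0 (Ne.symm hdjne)
    rw [hB] at hxB
    obtain ⟨hxFD, hxball⟩ := Finset.mem_filter.1 hxB
    obtain ⟨hxR, hxDom⟩ := Finset.mem_filter.1 hxFD
    have hxP : x ∈ P := hQ.2.1 j hxQ
    have hxΔ : numMissing x ≤ Δ := (hP x hxP).1
    have hxDomNe : (Dom x).Nonempty := (hP x hxP).2
    have hnsubJ : ¬ Dom x ⊆ pc.I j := by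
      rw [hIj]
      intro hsub
      obtain ⟨e, he⟩ := hxDomNe
      exact absurd (hsub he) (Finset.notMem_empty e)
    obtain ⟨estar, hestarDom, hestarZ⟩ := Finset.not_subset.1 (hcompat.1 x hxQ hnsubJ)
    have hcomp2 : dH x cj ≤ 2 * dH x u := by
      have h5 := hcompat.2 x hxQ hxDom
      push_neg at h5
      linarith
    have hminW : ∀ e ∈ pc.I i \ Z, w imin ≤ w e := by
      intro e he
      have h := hminProp e he
      unfold dI at h
      rw [Finset.sum_singleton, Finset.sum_singleton] at h
      exact le_of_sqrt_le (coordSq_nonneg _ _) (coordSq_nonneg _ _) h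
    have hRmaxW : ∀ r ∈ Rs, ∀ s ∈ (pc.I i \ {imin}) \ Rs, w s ≤ w r := by
      intro r hr s hs
      have h := hRmax r hr s hs
      unfold dI at h
      rw [Finset.sum_singleton, Finset.sum_singleton] at h
      exact le_of_sqrt_le (coordSq_nonneg _ _) (coordSq_nonneg _ _) h
    set K := Iij \ Dom x with hK
    set J := Rs ∩ Dom x with hJdef
    -- cardinalities
    have hMis : K.card + (Rs \ Dom x).card ≤ Δ := by
      have hsub : K ∪ (Rs \ Dom x) ⊆ Finset.univ.filter (fun e => x e = none) := by
        intro e he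
        simp only [Finset.mem_filter, Finset.mem_univ, true_and]
        rcases Finset.mem_union.1 he with h | h
        · have h6 := (Finset.mem_sdiff.1 h).2
          by_contra hne; exact h6 (mem_Dom.2 hne)
        · have h6 := (Finset.mem_sdiff.1 h).2
          by_contra hne; exact h6 (mem_Dom.2 hne)
      have hdisjKR : Disjoint K (Rs \ Dom x) := by
        rw [Finset.disjoint_left]
        intro e heK heR
        have h7 : e ∈ Iij := (Finset.mem_sdiff.1 heK).1
        have h8 : e ∉ Rs := (Finset.mem_sdiff.1 (hIij ▸ h7)).2
        exact h8 (Finset.mem_sdiff.1 heR).1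
      calc K.card + (Rs \ Dom x).card = (K ∪ (Rs \ Dom x)).card :=
            (Finset.card_union_of_disjoint hdisjKR).symm
        _ ≤ (Finset.univ.filter (fun e => x e = none)).card := Finset.card_le_card hsub
        _ ≤ Δ := hxΔ
    have hJcard : K.card ≤ J.card := by
      have hcic := Finset.card_inter_add_card_sdiff Rs (Dom x)
      rw [← hJdef] at hcic
      omega
    -- Σ_K w ≤ Σ_J w
    have hJRs : J ⊆ Rs := hJdef ▸ Finset.inter_subset_left
    have hKI : ∀ e ∈ K, e ≠ imin → e ∈ (pc.I i \ {imin}) \ Rs := by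
      intro e he hne
      obtain ⟨heIij, heDom⟩ := Finset.mem_sdiff.1 he
      obtain ⟨heI, heRs⟩ := Finset.mem_sdiff.1 (hIij ▸ heIij)
      exact Finset.mem_sdiff.2 ⟨Finset.mem_sdiff.2 ⟨heI, by simpa using hne⟩, heRs⟩
    have hKJ : ∑ e ∈ K, w e ≤ ∑ r ∈ J, w r := by
      by_cases himK : imin ∈ K
      · have himinDom : imin ∉ Dom x := (Finset.mem_sdiff.1 himK).2
        have hestarI : estar ∈ pc.I i := hxDom hestarDom
        have hestarne : estar ≠ imin := fun h => himinDom (h ▸ hestarDom)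
        have hminstar : w imin ≤ w estar :=
          hminW estar (Finset.mem_sdiff.2 ⟨hestarI, hestarZ⟩)
        by_cases hestarRs : estar ∈ Rs
        · have hestarJ : estar ∈ J := hJdef ▸ Finset.mem_inter.2 ⟨hestarRs, hestarDom⟩
          have h1 : ∑ e ∈ K.erase imin, w e ≤ ∑ r ∈ J.erase estar, w r := by
            apply sum_le_sum_of_card_le hw0
            · rw [Finset.card_erase_of_mem himK, Finset.card_erase_of_mem hestarJ]
              omega
            · intro e he r hr
              exact hRmaxW r (hJRs (Finset.mem_of_mem_erase hr)) e
                (hKI e (Finset.mem_of_mem_erase he) (Finset.ne_of_mem_erase he))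
          calc ∑ e ∈ K, w e = w imin + ∑ e ∈ K.erase imin, w e :=
                (Finset.add_sum_erase K w himK).symm
            _ ≤ w estar + ∑ r ∈ J.erase estar, w r := add_le_add hminstar h1
            _ = ∑ r ∈ J, w r := Finset.add_sum_erase J w hestarJ
        · have hestar' : estar ∈ (pc.I i \ {imin}) \ Rs :=
            Finset.mem_sdiff.2 ⟨Finset.mem_sdiff.2 ⟨hestarI, by simpa using hestarne⟩, hestarRs⟩
          apply sum_le_sum_of_card_le hw0 hJcard
          intro e he r hr
          by_cases hene : e = imin
          · subst hene; exact le_trans hminstar (hRmaxW r (hJRs hr) estar hestar')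
          · exact hRmaxW r (hJRs hr) e (hKI e he hene)
      · apply sum_le_sum_of_card_le hw0 hJcard
        intro e he r hr
        exact hRmaxW r (hJRs hr) e (hKI e he (fun h => himK (h ▸ he)))
    -- numeric contradiction
    have hA : dH x u ≤ dj / 4 := hxball
    have hA0 : 0 ≤ dH x u := Real.sqrt_nonneg _
    have hsplit : dj ^ 2 ≤ ∑ e ∈ Dom x, w e := by
      have h1 : ∑ e ∈ Iij ∩ Dom x, w e + ∑ e ∈ K, w e = ∑ e ∈ Iij, w e := by
        rw [hK]; exact Finset.sum_inter_add_sum_sdiff Iij (Dom x) w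
      have h2 : ∑ e ∈ Dom x ∩ Iij, w e + ∑ e ∈ Dom x \ Iij, w e = ∑ e ∈ Dom x, w e :=
        Finset.sum_inter_add_sum_sdiff (Dom x) Iij w
      have h3 : Dom x \ Iij = J := by
        rw [hJdef, hIij]
        ext e
        simp only [Finset.mem_sdiff, Finset.mem_inter]
        constructor
        · rintro ⟨heD, hne⟩
          refine ⟨?_, heD⟩
          by_contra heRs
          exact hne ⟨hxDom heD, heRs⟩
        · rintro ⟨heRs, heD⟩
          exact ⟨heD, fun hcon => hcon.2 heRs⟩
      have h4 : ∑ e ∈ Dom x ∩ Iij, w e = ∑ e ∈ Iij ∩ Dom x, w e := by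
        rw [Finset.inter_comm]
      rw [hdjsq, ← h1]
      rw [h3] at h2
      rw [h4] at h2
      linarith
    have hDu : ∑ e ∈ Dom x, coordSq (x e) (u e) ≤ dH x u ^ 2 := by
      unfold dH
      rw [dI_sq]
      exact Finset.sum_le_sum_of_subset_of_nonneg (Finset.subset_univ _)
        fun _ _ _ => coordSq_nonneg _ _
    have hDc : ∑ e ∈ Dom x, coordSq (x e) (cj e) ≤ dH x cj ^ 2 := by
      unfold dH
      rw [dI_sq]
      exact Finset.sum_le_sum_of_subset_of_nonneg (Finset.subset_univ _)
        fun _ _ _ => coordSq_nonneg _ _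
    have hB0 : 0 ≤ dH x cj := Real.sqrt_nonneg _
    have hDc2 : dH x cj ^ 2 ≤ 4 * dH x u ^ 2 := by nlinarith
    have hper : ∀ e ∈ Dom x, w e ≤ 2 * coordSq (x e) (u e) + 2 * coordSq (x e) (cj e) := by
      intro e he
      obtain ⟨v, hv⟩ := huI e (hxDom he)
      obtain ⟨a, ha⟩ := Option.ne_none_iff_exists'.1 (mem_Dom.1 he)
      simp only [hw]
      cases hcje : cj e with
      | none =>
        rw [hv, ha]
        have : coordSq (some v) none = 0 := rfl
        rw [this]
        have h1 : coordSq (some a) (some v) = (a - v) ^ 2 := rfl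
        have h2 : coordSq (some a) none = 0 := rfl
        rw [h1, h2]
        positivity
      | some g =>
        rw [hv, ha]
        have h1 : coordSq (some v) (some g) = (v - g) ^ 2 := rfl
        have h2 : coordSq (some a) (some v) = (a - v) ^ 2 := rfl
        have h3 : coordSq (some a) (some g) = (a - g) ^ 2 := rfl
        rw [h1, h2, h3]
        nlinarith [sq_nonneg (2 * a - v - g)]
    have hsum : ∑ e ∈ Dom x, w e ≤ 2 * dH x u ^ 2 + 2 * dH x cj ^ 2 := by
      calc ∑ e ∈ Dom x, w e
          ≤ ∑ e ∈ Dom x, (2 * coordSq (x e) (u e) + 2 * coordSq (x e) (cj e)) :=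
            Finset.sum_le_sum hper
        _ = 2 * (∑ e ∈ Dom x, coordSq (x e) (u e)) + 2 * (∑ e ∈ Dom x, coordSq (x e) (cj e)) := by
            rw [Finset.sum_add_distrib, Finset.mul_sum, Finset.mul_sum]
        _ ≤ 2 * dH x u ^ 2 + 2 * dH x cj ^ 2 := by linarith
    have hA2 : dH x u ^ 2 ≤ (dj / 4) ^ 2 := pow_le_pow_left₀ hA0 hA 2
    nlinarith [pow_pos hdjpos 2]
  -- conclusion
  by_cases hdjzero : dj = 0
  · have hzero : ∀ e ∈ Iij, w e = 0 := by
      intro e he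
      have hsum0 : ∑ e ∈ Iij, w e = 0 := by rw [← hdjsq, hdjzero]; ring
      exact (Finset.sum_eq_zero_iff_of_nonneg fun e _ => hw0 e).1 hsum0 e he
    have hle0 : f2I Iij (Q j) u - f2I Iij (Q j) cj ≤ 0 := by
      rw [hdiff]
      refine le_of_eq (Finset.sum_eq_zero fun e he => ?_)
      rw [hzero e he, mul_zero]
    have hRHS : 0 ≤ 16 * c * (1 + t) * OPT pc := by
      have h1 : (0:ℝ) ≤ 16 * c * (1 + t) := by nlinarith
      exact mul_nonneg h1 hOPT0
    linarith
  · have hdjpos : 0 < dj := lt_of_le_of_ne hdj0 (Ne.symm hdjzero)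
    have hQBeq : Q j \ B = Q j := by
      apply Finset.sdiff_eq_self_iff_disjoint.2
      rw [Finset.disjoint_left]
      intro a ha
      exact hBQ a ha hdjzero
    rw [hQBeq] at hfirst
    have h2 : (Sy.card : ℝ) * dj ^ 2 ≤ 16 * E := by nlinarith
    have h3 : E ≤ (1 + t) * OPT pc := hval
    have hchain : ((Q j).card : ℝ) * dj ^ 2 ≤ 16 * c * (1 + t) * OPT pc := by
      have hdj2 : (0:ℝ) < dj ^ 2 := pow_pos hdjpos 2
      calc ((Q j).card : ℝ) * dj ^ 2
          ≤ (c * (Sy.card : ℝ)) * dj ^ 2 :=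
            mul_le_mul_of_nonneg_right hfirst.le hdj2.le
        _ = c * ((Sy.card : ℝ) * dj ^ 2) := by ring
        _ ≤ c * (16 * E) := mul_le_mul_of_nonneg_left h2 hc.le
        _ = 16 * c * E := by ring
        _ ≤ 16 * c * ((1 + t) * OPT pc) :=
            mul_le_mul_of_nonneg_left h3 (by positivity)
        _ = 16 * c * (1 + t) * OPT pc := by ring
    linarith

end KMD
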